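/- Let Γ be a non-trivial finitely generated subgroup of Homeo₊(I), with a fixed finite symmetric generating set, such that every non-identity element of Γ has finitely many fixed points in (0,1), and let f be the biggest generator (ξ ≤ f in the biorder for every generator ξ). Then Γ_f is a normal subgroup of Γ, the quotient Γ/Γ_f is Abelian, and in particular [Γ, Γ] ≤ Γ_f. -/

import Mathlib

noncomputable section

/-- The unit interval `[0,1] ⊆ ℝ`. -/
abbrev unitI : Set ℝ := Set.Icc (0:ℝ) 1

/-- Ambient group: bijections of the unit interval. -/
abbrev IntervalMap : Type := Equiv.Perm ↥unitI

/-- The extension of `σ` to `ℝ`, by the identity outside `[0,1]`. -/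
def toReal (σ : IntervalMap) : ℝ → ℝ :=
  fun x => if h : x ∈ unitI then (σ ⟨x, h⟩ : ℝ) else x

/-- `σ` is an orientation-preserving homeomorphism of `[0,1]` (a strictly
increasing bijection of `[0,1]`; such a map automatically fixes `0` and `1`
and is continuous). -/
def IsOPH (σ : IntervalMap) : Prop := StrictMono fun x : ↥unitI => (σ x : ℝ)

/-- `σ` extends to a `C¹` function on `[0,1]`. -/
def IsC1On (σ : IntervalMap) : Prop := ContDiffOn ℝ 1 (toReal σ) unitI

/-- `σ` is an orientation-preserving `C¹` diffeomorphism of `[0,1]`. -/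
def IsOPD (σ : IntervalMap) : Prop := IsOPH σ ∧ IsC1On σ ∧ IsC1On σ⁻¹

/-- `Γ` is a subgroup of `Diff₊(I)`. -/
def DiffSubgroup (Γ : Subgroup IntervalMap) : Prop := ∀ γ ∈ Γ, IsOPD γ

/-- `Γ` is a subgroup of `Homeo₊(I)`. -/
def HomeoSubgroup (Γ : Subgroup IntervalMap) : Prop := ∀ γ ∈ Γ, IsOPH γ

/-- The set of fixed points of `σ` in the open interval `(0,1)`. -/
def FixPts (σ : IntervalMap) : Set ↥unitI :=
  {x : ↥unitI | σ x = x ∧ 0 < (x : ℝ) ∧ (x : ℝ) < 1}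

/-- Every non-identity element of `Γ` has finitely many fixed points in `(0,1)`. -/
def FinFix (Γ : Subgroup IntervalMap) : Prop := ∀ γ ∈ Γ, γ ≠ 1 → (FixPts γ).Finite

/-- The `C⁰`-norm `‖σ‖ = sup_{x ∈ [0,1]} |σ(x) - x|`. -/
def C0norm (σ : IntervalMap) : ℝ := ⨆ x : ↥unitI, |(σ x : ℝ) - (x : ℝ)|

/-- `Γ` is locally transitive. -/
def LocTrans (Γ : Subgroup IntervalMap) : Prop :=
  ∀ p : ↥unitI, 0 < (p : ℝ) → (p : ℝ) < 1 → ∀ ε : ℝ, 0 < ε →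
    ∃ γ ∈ Γ, C0norm γ < ε ∧ γ p ≠ p

/-- `Γ` is irreducible: no global fixed point in `(0,1)`. -/
def Irred (Γ : Subgroup IntervalMap) : Prop :=
  ¬ ∃ p : ↥unitI, 0 < (p : ℝ) ∧ (p : ℝ) < 1 ∧ ∀ γ ∈ Γ, γ p = p

/-- The group `Aff₊(ℝ)` of orientation-preserving affine maps `x ↦ a x + b`,
`a > 0`, as a subgroup of the permutation group of `ℝ`. -/
def AffPlus : Subgroup (Equiv.Perm ℝ) where
  carrier := {e | ∃ a b : ℝ, 0 < a ∧ ∀ x, e x = a * x + b}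
  one_mem' := ⟨1, 0, one_pos, fun x => by simp⟩
  mul_mem' := by
    rintro e f ⟨a, b, ha, he⟩ ⟨c, d, hc, hf⟩
    refine ⟨a * c, a * d + b, mul_pos ha hc, fun x => ?_⟩
    rw [Equiv.Perm.mul_apply, hf, he]; ring
  inv_mem' := by
    rintro e ⟨a, b, ha, he⟩
    refine ⟨a⁻¹, -b / a, by positivity, fun y => ?_⟩
    apply e.injective
    rw [← Equiv.Perm.mul_apply, mul_inv_cancel, Equiv.Perm.one_apply, he]
    field_simp
    ring

/-- `G` embeds into (i.e. is isomorphic to a subgroup of) `Aff₊(ℝ)`. -/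
def EmbedsInAff (G : Type*) [Group G] : Prop :=
  ∃ φ : G →* ↥AffPlus, Function.Injective φ

/-- `G` embeds into `Aff₊(ℝ)ⁿ` for some `n ≥ 1`. -/
def EmbedsInAffPow (G : Type*) [Group G] : Prop :=
  ∃ n : ℕ, 1 ≤ n ∧ ∃ φ : G →* (Fin n → ↥AffPlus), Function.Injective φ

/-- `G` has infinite girth: for every `m` there is a finite generating set `S`
such that no non-trivial reduced word of length at most `m` in `S ∪ S⁻¹`
represents the identity. -/
def HasInfiniteGirth (G : Type*) [Group G] : Prop :=
  ∀ m : ℕ, ∃ S : Finset G, Subgroup.closure (S : Set G) = ⊤ ∧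
    ∀ w : FreeGroup {x // x ∈ S}, w ≠ 1 →
      (∃ l : List ({x // x ∈ S} × Bool), l.length ≤ m ∧ FreeGroup.mk l = w) →
      FreeGroup.lift (fun s => (s : G)) w ≠ 1

/-- `a` and `b` generate a free semigroup on two generators: distinct
non-empty positive words in `a, b` give distinct elements. -/
def FreeSemigroupPair {G : Type*} [Group G] (a b : G) : Prop :=
  Function.Injective
    ⇑(FreeSemigroup.lift (fun x : Bool => if x then a else b) : FreeSemigroup Bool →ₙ* G)

/-- `g < f` in the biorder: `g(x) < f(x)` near `0`. -/
def ltNear (g f : IntervalMap) : Prop :=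
  ∃ δ : ℝ, 0 < δ ∧ ∀ x : ↥unitI, 0 < (x : ℝ) → (x : ℝ) < δ → (g x : ℝ) < (f x : ℝ)

/-- `g ≤ f` in the biorder. -/
def leNear (g f : IntervalMap) : Prop := ltNear g f ∨ g = f

/-- `g << f`: `g` is infinitesimal with respect to `f`, i.e. `gⁿ < f` for all `n ∈ ℤ`. -/
def Infinitesimal (g f : IntervalMap) : Prop := ∀ n : ℤ, ltNear (g ^ n) f

/-- `(f, g)` is a crossed pair on the interval `(a,b)`: `f` fixes `a` and `b`
but no point strictly between them, while `g` maps `a` or `b` into `(a,b)`. -/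
def CrossedOn (f g : IntervalMap) (a b : ↥unitI) : Prop :=
  f a = a ∧ f b = b ∧ (∀ x : ↥unitI, (a : ℝ) < x → (x : ℝ) < b → f x ≠ x) ∧
  (((a : ℝ) < (g a : ℝ) ∧ (g a : ℝ) < b) ∨ ((a : ℝ) < (g b : ℝ) ∧ (g b : ℝ) < b))

/-- `(f, g)` is a crossed pair. -/
def CrossedPair (f g : IntervalMap) : Prop :=
  ∃ a b : ↥unitI, (a : ℝ) < b ∧ (CrossedOn f g a b ∨ CrossedOn g f a b)

/-- The auxiliary point configuration used in weak transitivity: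
`extPt γ p 0 = 0`, `extPt γ p j = γ(pⱼ)` for `1 ≤ j ≤ k` (here `pⱼ = p ⟨j-1⟩`
in `0`-indexed notation), and `extPt γ p (k+1) = 1`. -/
def extPt (γ : IntervalMap) {k : ℕ} (p : Fin k → ↥unitI) (j : ℕ) : ℝ :=
  if j = 0 then 0 else if h : j - 1 < k then (γ (p ⟨j - 1, h⟩) : ℝ) else 1

/-- `Γ` is weakly `k`-transitive. -/
def WeaklyKTrans (Γ : Subgroup IntervalMap) (k : ℕ) : Prop :=
  ∀ g ∈ Γ, ∀ p : Fin k → ↥unitI,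
    (∀ i, 0 < (p i : ℝ) ∧ (p i : ℝ) < 1) →
    (StrictMono fun i => (p i : ℝ)) →
    ∀ ε : ℝ, 0 < ε →
      ∃ γ ∈ Γ, extPt γ p k < ε ∧
        ∀ i : Fin k,
          extPt γ p i.val < (g (γ (p i)) : ℝ) ∧
            (g (γ (p i)) : ℝ) < extPt γ p (i.val + 2)

/-- `Γ` is weakly transitive. -/
def WeakTrans (Γ : Subgroup IntervalMap) : Prop := ∀ k : ℕ, 1 ≤ k → WeaklyKTrans Γ k

open scoped commutatorElement


/- ===================== Auxiliary development ===================== -/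

section ConcreteOrder

theorem Equiv.Perm.apply_inv_self {α : Type*} (f : Equiv.Perm α) (x : α) : f (f⁻¹ x) = x :=
  f.apply_symm_apply x

/-- The point `0` of the unit interval. -/
def z0 : ↥unitI := ⟨0, le_refl 0, zero_le_one⟩

lemma oph_strictMono {σ : IntervalMap} (h : IsOPH σ) : StrictMono (⇑σ) :=
  fun _ _ hab => Subtype.coe_lt_coe.mp (h hab)

lemma oph_fix_zero {σ : IntervalMap} (h : IsOPH σ) : σ z0 = z0 := by
  have hm := oph_strictMono h
  have h1 : z0 ≤ σ⁻¹ z0 := Subtype.coe_le_coe.mp (σ⁻¹ z0).2.1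
  have h2 : σ z0 ≤ σ (σ⁻¹ z0) := hm.le_iff_le.mpr h1
  rw [Equiv.Perm.apply_inv_self] at h2
  have h3 : z0 ≤ σ z0 := Subtype.coe_le_coe.mp (σ z0).2.1
  exact le_antisymm h2 h3

lemma oph_inv {σ : IntervalMap} (h : IsOPH σ) : IsOPH σ⁻¹ := by
  intro a b hab
  have hm := oph_strictMono h
  have h2 : σ (σ⁻¹ a) < σ (σ⁻¹ b) := by
    rw [Equiv.Perm.apply_inv_self, Equiv.Perm.apply_inv_self]
    exact hab
  exact Subtype.coe_lt_coe.mpr (hm.lt_iff_lt.mp h2)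

lemma oph_pos {σ : IntervalMap} (h : IsOPH σ) {x : ↥unitI} (hx : 0 < (x:ℝ)) :
    0 < ((σ x : ↥unitI) : ℝ) := by
  have h1 : z0 < x := Subtype.coe_lt_coe.mp hx
  have h2 := h h1
  simp only [oph_fix_zero h] at h2
  exact h2

lemma ltNear_trans {a b c : IntervalMap} (h1 : ltNear a b) (h2 : ltNear b c) : ltNear a c := by
  obtain ⟨δ1, hδ1, H1⟩ := h1
  obtain ⟨δ2, hδ2, H2⟩ := h2
  refine ⟨min δ1 δ2, lt_min hδ1 hδ2, fun x hx0 hxδ => ?_⟩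
  exact (H1 x hx0 (hxδ.trans_le (min_le_left _ _))).trans (H2 x hx0 (hxδ.trans_le (min_le_right _ _)))

lemma ltNear_irrefl (a : IntervalMap) : ¬ ltNear a a := by
  rintro ⟨δ, hδ, H⟩
  have h0 : 0 < min δ 1 := lt_min hδ one_pos
  have hle : min δ 1 ≤ 1 := min_le_right _ _
  have hmem : min δ 1 / 2 ∈ unitI := ⟨by linarith, by linarith⟩
  have hδ' : min δ 1 / 2 < δ := by
    have := min_le_left δ 1
    linarith
  exact lt_irrefl _ (H ⟨_, hmem⟩ (by simpa using by linarith : (0:ℝ) < min δ 1 / 2) hδ')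

lemma ltNear_asymm {a b : IntervalMap} (h1 : ltNear a b) (h2 : ltNear b a) : False :=
  ltNear_irrefl a (ltNear_trans h1 h2)

lemma ltNear_mul_left {a b c : IntervalMap} (hc : IsOPH c) (h : ltNear a b) :
    ltNear (c * a) (c * b) := by
  obtain ⟨δ, hδ, H⟩ := h
  refine ⟨δ, hδ, fun x hx0 hxδ => ?_⟩
  rw [Equiv.Perm.mul_apply, Equiv.Perm.mul_apply]
  exact hc (Subtype.coe_lt_coe.mp (H x hx0 hxδ))

lemma ltNear_mul_right {a b c : IntervalMap} (hc : IsOPH c) (h : ltNear a b) :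
    ltNear (a * c) (b * c) := by
  obtain ⟨δ, hδ, H⟩ := h
  have hinv := oph_inv hc
  have hd0 : (0:ℝ) < min δ 1 := lt_min hδ one_pos
  have hdmem : min δ 1 ∈ unitI := ⟨hd0.le, min_le_right _ _⟩
  refine ⟨((c⁻¹ ⟨min δ 1, hdmem⟩ : ↥unitI) : ℝ), oph_pos hinv hd0, ?_⟩
  intro x hx0 hxδ'
  rw [Equiv.Perm.mul_apply, Equiv.Perm.mul_apply]
  have hcx0 : 0 < ((c x : ↥unitI):ℝ) := oph_pos hc hx0
  have hcxδ : ((c x : ↥unitI):ℝ) < δ := by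
    have h1 : x < c⁻¹ ⟨min δ 1, hdmem⟩ := Subtype.coe_lt_coe.mp hxδ'
    have h2 := hc h1
    simp only [Equiv.Perm.apply_inv_self] at h2
    calc ((c x : ↥unitI):ℝ) < min δ 1 := h2
    _ ≤ δ := min_le_left _ _
  exact H (c x) hcx0 hcxδ

lemma toReal_eq (σ : IntervalMap) {x : ℝ} (hx : x ∈ unitI) :
    toReal σ x = ((σ ⟨x, hx⟩ : ↥unitI) : ℝ) := dif_pos hx

lemma toReal_strictMono {σ : IntervalMap} (h : IsOPH σ) : StrictMono (toReal σ) := by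
  intro s t hst
  unfold toReal
  by_cases hs : s ∈ unitI <;> by_cases ht : t ∈ unitI
  · rw [dif_pos hs, dif_pos ht]
    exact h (show (⟨s,hs⟩:↥unitI) < ⟨t,ht⟩ from Subtype.mk_lt_mk.mpr hst)
  · rw [dif_pos hs, dif_neg ht]
    have h1 : 1 < t := by
      simp only [unitI, Set.mem_Icc, not_and, not_le] at ht
      exact ht (le_of_lt (lt_of_le_of_lt hs.1 hst))
    calc ((σ ⟨s,hs⟩ : ↥unitI):ℝ) ≤ 1 := (σ ⟨s,hs⟩).2.2
    _ < t := h1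
  · rw [dif_neg hs, dif_pos ht]
    have h1 : s < 0 := by
      simp only [unitI, Set.mem_Icc, not_and, not_le] at hs
      by_contra h2
      push_neg at h2
      exact absurd ht.2 (not_le.mpr (lt_trans (hs h2) hst))
    calc s < 0 := h1
    _ ≤ _ := (σ ⟨t, ht⟩).2.1
  · rw [dif_neg hs, dif_neg ht]
    exact hst

lemma toReal_surj {σ : IntervalMap} (h : IsOPH σ) : Function.Surjective (toReal σ) := by
  intro y
  by_cases hy : y ∈ unitI
  · refine ⟨((σ⁻¹ ⟨y, hy⟩ : ↥unitI) : ℝ), ?_⟩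
    unfold toReal
    rw [dif_pos (σ⁻¹ ⟨y, hy⟩).2]
    rw [Subtype.coe_eta, Equiv.Perm.apply_inv_self]
  · refine ⟨y, ?_⟩
    unfold toReal
    rw [dif_neg hy]

lemma toReal_cont {σ : IntervalMap} (h : IsOPH σ) : Continuous (toReal σ) := by
  have := OrderIso.continuous
    (StrictMono.orderIsoOfSurjective (toReal σ) (toReal_strictMono h) (toReal_surj h))
  rwa [StrictMono.coe_orderIsoOfSurjective] at this

lemma exists_fix_between {σ : IntervalMap} (h : IsOPH σ) {x y : ↥unitI} (hxy : (x:ℝ) ≤ (y:ℝ))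
    (hcase : (((σ x : ↥unitI) : ℝ) < x ∧ (y:ℝ) < ((σ y : ↥unitI) : ℝ)) ∨
      ((x:ℝ) < ((σ x : ↥unitI) : ℝ) ∧ ((σ y : ↥unitI) : ℝ) < y)) :
    ∃ z : ↥unitI, (x:ℝ) ≤ (z:ℝ) ∧ (z:ℝ) ≤ (y:ℝ) ∧ σ z = z := by
  set F : ℝ → ℝ := fun t => toReal σ t - t with hF
  have hFc : Continuous F := (toReal_cont h).sub continuous_id
  have hFx : F (x:ℝ) = ((σ x : ↥unitI):ℝ) - (x:ℝ) := by
    simp only [hF]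
    rw [toReal_eq σ x.2, Subtype.coe_eta]
  have hFy : F (y:ℝ) = ((σ y : ↥unitI):ℝ) - (y:ℝ) := by
    simp only [hF]
    rw [toReal_eq σ y.2, Subtype.coe_eta]
  have main : ∀ z : ℝ, z ∈ Set.Icc (x:ℝ) (y:ℝ) → F z = 0 →
      ∃ z' : ↥unitI, (x:ℝ) ≤ (z':ℝ) ∧ (z':ℝ) ≤ (y:ℝ) ∧ σ z' = z' := by
    intro z hz hz0
    have hzI : z ∈ unitI := ⟨le_trans x.2.1 hz.1, le_trans hz.2 y.2.2⟩
    refine ⟨⟨z, hzI⟩, hz.1, hz.2, ?_⟩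
    have h1 : toReal σ z = z := by
      simp only [hF] at hz0
      linarith
    rw [toReal_eq σ hzI] at h1
    exact Subtype.ext h1
  rcases hcase with ⟨h1, h2⟩ | ⟨h1, h2⟩
  · have hx0 : F (x:ℝ) < 0 := by rw [hFx]; linarith
    have hy0 : 0 < F (y:ℝ) := by rw [hFy]; linarith
    have hsub := intermediate_value_Icc hxy hFc.continuousOn
    obtain ⟨z, hz, hz0⟩ := hsub ⟨hx0.le, hy0.le⟩
    exact main z hz hz0
  · have hx0 : 0 < F (x:ℝ) := by rw [hFx]; linarith
    have hy0 : F (y:ℝ) < 0 := by rw [hFy]; linarith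
    have hsub := intermediate_value_Icc' hxy hFc.continuousOn
    obtain ⟨z, hz, hz0⟩ := hsub ⟨hy0.le, hx0.le⟩
    exact main z hz hz0

lemma sign_const {σ : IntervalMap} (h : IsOPH σ) (hne : σ ≠ 1) (hfin : (FixPts σ).Finite) :
    ltNear 1 σ ∨ ltNear σ 1 := by
  classical
  set T : Set ℝ := (fun x : ↥unitI => (x:ℝ)) '' FixPts σ with hT
  have hTfin : T.Finite := hfin.image _
  have hKfin : (insert (1:ℝ) T).Finite := hTfin.insert 1
  have hKne : hKfin.toFinset.Nonempty := ⟨1, by simp⟩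
  set δ := hKfin.toFinset.min' hKne with hδdef
  have hδmem : δ ∈ insert (1:ℝ) T := (Set.Finite.mem_toFinset hKfin).mp (Finset.min'_mem _ hKne)
  have hδpos : 0 < δ := by
    rcases Set.mem_insert_iff.mp hδmem with h1 | h1
    · rw [h1]; exact one_pos
    · obtain ⟨x, hx, hxe⟩ := h1
      rw [← hxe]
      exact hx.2.1
  have hδle : ∀ r ∈ insert (1:ℝ) T, δ ≤ r :=
    fun r hr => Finset.min'_le _ r ((Set.Finite.mem_toFinset hKfin).mpr hr)
  have hδ1 : δ ≤ 1 := hδle 1 (Set.mem_insert _ _)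
  have hnofix : ∀ x : ↥unitI, 0 < (x:ℝ) → (x:ℝ) < δ → σ x ≠ x := by
    intro x hx0 hxδ hfx
    have hx1 : (x:ℝ) < 1 := lt_of_lt_of_le hxδ hδ1
    have hmem : x ∈ FixPts σ := ⟨hfx, hx0, hx1⟩
    exact absurd (hδle _ (Set.mem_insert_of_mem _ ⟨x, hmem, rfl⟩)) (not_le.mpr hxδ)
  have hx₀I : δ/2 ∈ unitI := ⟨by linarith, by linarith⟩
  set x₀ : ↥unitI := ⟨δ/2, hx₀I⟩ with hx₀
  have hx₀0 : 0 < (x₀:ℝ) := by show (0:ℝ) < δ/2; linarith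
  have hx₀δ : (x₀:ℝ) < δ := by show δ/2 < δ; linarith
  rcases lt_trichotomy ((σ x₀ : ↥unitI):ℝ) ((x₀:ℝ)) with hc | hc | hc
  · right
    refine ⟨δ, hδpos, fun x hx0 hxδ => ?_⟩
    rw [Equiv.Perm.one_apply]
    by_contra hcon
    push_neg at hcon
    have hne' : σ x ≠ x := hnofix x hx0 hxδ
    have hlt : (x:ℝ) < ((σ x : ↥unitI):ℝ) := lt_of_le_of_ne hcon (fun e => hne' (Subtype.ext e.symm))
    rcases le_total ((x:ℝ)) ((x₀:ℝ)) with hle | hle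
    · obtain ⟨z, hz1, hz2, hz3⟩ := exists_fix_between h hle (Or.inr ⟨hlt, hc⟩)
      exact hnofix z (lt_of_lt_of_le hx0 hz1) (lt_of_le_of_lt hz2 hx₀δ) hz3
    · obtain ⟨z, hz1, hz2, hz3⟩ := exists_fix_between h hle (Or.inl ⟨hc, hlt⟩)
      exact hnofix z (lt_of_lt_of_le hx₀0 hz1) (lt_of_le_of_lt hz2 hxδ) hz3
  · exact absurd (Subtype.ext hc) (hnofix x₀ hx₀0 hx₀δ)
  · left
    refine ⟨δ, hδpos, fun x hx0 hxδ => ?_⟩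
    rw [Equiv.Perm.one_apply]
    by_contra hcon
    push_neg at hcon
    have hne' : σ x ≠ x := hnofix x hx0 hxδ
    have hlt : ((σ x : ↥unitI):ℝ) < (x:ℝ) := lt_of_le_of_ne hcon (fun e => hne' (Subtype.ext e))
    rcases le_total ((x:ℝ)) ((x₀:ℝ)) with hle | hle
    · obtain ⟨z, hz1, hz2, hz3⟩ := exists_fix_between h hle (Or.inl ⟨hlt, hc⟩)
      exact hnofix z (lt_of_lt_of_le hx0 hz1) (lt_of_le_of_lt hz2 hx₀δ) hz3
    · obtain ⟨z, hz1, hz2, hz3⟩ := exists_fix_between h hle (Or.inr ⟨hc, hlt⟩)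
      exact hnofix z (lt_of_lt_of_le hx₀0 hz1) (lt_of_le_of_lt hz2 hxδ) hz3

lemma ltNear_total {Γ : Subgroup IntervalMap} (hH : HomeoSubgroup Γ) (hF : FinFix Γ)
    {a b : IntervalMap} (ha : a ∈ Γ) (hb : b ∈ Γ) (hab : a ≠ b) : ltNear a b ∨ ltNear b a := by
  set c := b⁻¹ * a with hc
  have hcΓ : c ∈ Γ := Γ.mul_mem (Γ.inv_mem hb) ha
  have hc1 : c ≠ 1 := by
    intro hh
    rw [hc, inv_mul_eq_one] at hh
    exact hab hh.symm
  have hbc : b * c = a := by rw [hc]; group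
  rcases sign_const (hH c hcΓ) hc1 (hF c hcΓ hc1) with hs | hs
  · refine Or.inr ?_
    have := ltNear_mul_left (hH b hb) hs
    rwa [mul_one, hbc] at this
  · refine Or.inl ?_
    have := ltNear_mul_left (hH b hb) hs
    rwa [mul_one, hbc] at this

/-- The bi-invariant linear order on `Γ` induced by comparison of germs at `0`. -/
def gammaLinearOrder (Γ : Subgroup IntervalMap) (hH : HomeoSubgroup Γ) (hF : FinFix Γ) :
    LinearOrder ↥Γ where
  lt a b := ltNear (a : IntervalMap) (b : IntervalMap)
  le a b := ltNear (a : IntervalMap) (b : IntervalMap) ∨ a = b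
  le_refl a := Or.inr rfl
  le_trans a b c hab hbc := by
    rcases hab with h1 | h1
    · rcases hbc with h2 | h2
      · exact Or.inl (ltNear_trans h1 h2)
      · exact Or.inl (h2 ▸ h1)
    · rw [h1]; exact hbc
  le_antisymm a b hab hba := by
    rcases hab with h1 | h1
    · rcases hba with h2 | h2
      · exact (ltNear_asymm h1 h2).elim
      · exact h2.symm
    · exact h1
  le_total a b := by
    rcases eq_or_ne a b with he | hne
    · exact Or.inl (Or.inr he)
    · rcases ltNear_total hH hF a.2 b.2 (fun e => hne (Subtype.ext e)) with h | h
      · exact Or.inl (Or.inl h)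
      · exact Or.inr (Or.inl h)
  lt_iff_le_not_ge a b := by
    constructor
    · intro h
      refine ⟨Or.inl h, ?_⟩
      rintro (h' | h')
      · exact ltNear_asymm h h'
      · rw [h'] at h
        exact ltNear_irrefl _ h
    · rintro ⟨h1 | h1, h2⟩
      · exact h1
      · exact absurd (Or.inr h1.symm) h2
  toDecidableLE := Classical.decRel _

lemma gammaCovL (Γ : Subgroup IntervalMap) (hH : HomeoSubgroup Γ) (hF : FinFix Γ) :
    letI := gammaLinearOrder Γ hH hF
    CovariantClass ↥Γ ↥Γ (· * ·) (· ≤ ·) := by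
  letI := gammaLinearOrder Γ hH hF
  refine ⟨?_⟩
  intro c a b hab
  have h' : ltNear (a : IntervalMap) b ∨ a = b := hab
  rcases h' with h | h
  · exact Or.inl (ltNear_mul_left (hH _ c.2) h)
  · exact Or.inr (by rw [h])

lemma gammaCovR (Γ : Subgroup IntervalMap) (hH : HomeoSubgroup Γ) (hF : FinFix Γ) :
    letI := gammaLinearOrder Γ hH hF
    CovariantClass ↥Γ ↥Γ (Function.swap (· * ·)) (· ≤ ·) := by
  letI := gammaLinearOrder Γ hH hF
  refine ⟨?_⟩
  intro c a b hab
  have h' : ltNear (a : IntervalMap) b ∨ a = b := hab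
  rcases h' with h | h
  · exact Or.inl (ltNear_mul_right (hH _ c.2) h)
  · exact Or.inr (by rw [h])

end ConcreteOrder

section AbstractOrder

variable {G : Type*} [Group G] [LinearOrder G]
  [CovariantClass G G (· * ·) (· ≤ ·)] [CovariantClass G G (Function.swap (· * ·)) (· ≤ ·)]

theorem glt_mul_left (c : G) {a b : G} (h : a < b) : c * a < c * b :=
  lt_of_le_of_ne (mul_le_mul_right h.le c) fun e => h.ne (mul_left_cancel e)

theorem glt_mul_right (c : G) {a b : G} (h : a < b) : a * c < b * c :=
  lt_of_le_of_ne (mul_le_mul_left h.le c) fun e => h.ne (mul_right_cancel e)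

theorem gone_lt_zpow {f : G} (hf : 1 < f) {n : ℤ} (hn : 0 < n) : 1 < f ^ n := by
  lift n to ℕ using hn.le
  rw [zpow_natCast]
  exact one_lt_pow' hf (by omega)

theorem gzpow_lt_zpow {f : G} (hf : 1 < f) {m n : ℤ} (h : m < n) : f ^ m < f ^ n := by
  have h1 : f ^ n = f ^ m * f ^ (n - m) := by
    rw [← zpow_add]
    congr 1
    ring
  rw [h1]
  calc f ^ m = f ^ m * 1 := (mul_one _).symm
  _ < f ^ m * f ^ (n - m) := glt_mul_left _ (gone_lt_zpow hf (by omega))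

theorem gzpow_nonpos {g : G} (hg : 1 ≤ g) {n : ℤ} (hn : n ≤ 0) : g ^ n ≤ 1 := by
  have h1 : g⁻¹ ≤ 1 := by
    have := mul_le_mul_right hg g⁻¹
    simpa using this
  obtain ⟨k, hk⟩ : ∃ k : ℕ, n = -(k:ℤ) := ⟨(-n).toNat, by omega⟩
  rw [hk, zpow_neg, ← inv_zpow, zpow_natCast]
  calc g⁻¹ ^ k ≤ 1 ^ k := pow_le_pow_left' h1 k
  _ = 1 := one_pow k

theorem ginf_aux {f : G} (hf : 1 < f) {a c : G} (ha : ∀ n : ℤ, a ^ n < f) (ha1 : 1 ≤ a)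
    (h1 : c ≤ a * a) (h2 : c⁻¹ ≤ a * a) : ∀ n : ℤ, c ^ n < f := by
  have key : ∀ d : G, d ≤ a * a → ∀ k : ℕ, d ^ k < f := by
    intro d hd k
    have e1 : (a*a) ^ k = a ^ (2*k) := by
      rw [← pow_two, ← pow_mul]
    calc d ^ k ≤ (a*a) ^ k := pow_le_pow_left' hd k
    _ = a ^ (2*k) := e1
    _ < f := by
        have := ha ((2*k : ℕ) : ℤ)
        rwa [zpow_natCast] at this
  intro n
  rcases le_or_gt 0 n with hn | hn
  · lift n to ℕ using hn
    rw [zpow_natCast]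
    exact key c h1 n
  · obtain ⟨k, hk⟩ : ∃ k : ℕ, n = -(k:ℤ) := ⟨(-n).toNat, by omega⟩
    rw [hk, zpow_neg, ← inv_zpow, zpow_natCast]
    exact key c⁻¹ h2 k

/-- The subgroup of elements infinitesimal with respect to `f`. -/
def infSub (f : G) (hf : 1 < f) : Subgroup G where
  carrier := {g | ∀ n : ℤ, g ^ n < f}
  one_mem' := fun n => by simpa using hf
  inv_mem' := by
    intro g hg n
    show (g⁻¹) ^ n < f
    rw [inv_zpow, ← zpow_neg]
    exact hg (-n)
  mul_mem' := by
    intro a b ha hb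
    have inv_case : ∀ g : G, (∀ n : ℤ, g ^ n < f) → ∀ n : ℤ, (g⁻¹) ^ n < f := by
      intro g hg n
      rw [inv_zpow, ← zpow_neg]
      exact hg (-n)
    set m := max (max a a⁻¹) (max b b⁻¹) with hm
    have hm1 : (1:G) ≤ m := by
      rcases le_total 1 a with hx | hx
      · exact hx.trans ((le_max_left a a⁻¹).trans (le_max_left _ _))
      · have h1 : (1:G) ≤ a⁻¹ := by
          have := mul_le_mul_right hx a⁻¹
          simpa using this
        exact h1.trans ((le_max_right a a⁻¹).trans (le_max_left _ _))
    have hminf : ∀ n : ℤ, m ^ n < f := by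
      have h1 := max_choice a a⁻¹
      have h2 := max_choice b b⁻¹
      rcases max_choice (max a a⁻¹) (max b b⁻¹) with hcc | hcc <;> rw [hm, hcc]
      · rcases h1 with h' | h' <;> rw [h']
        · exact ha
        · exact inv_case a ha
      · rcases h2 with h' | h' <;> rw [h']
        · exact hb
        · exact inv_case b hb
    refine ginf_aux hf hminf hm1 ?_ ?_
    · exact mul_le_mul' ((le_max_left a a⁻¹).trans (le_max_left _ _))
        ((le_max_left b b⁻¹).trans (le_max_right _ _))
    · rw [mul_inv_rev]
      exact mul_le_mul' ((le_max_right b b⁻¹).trans (le_max_right _ _))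
        ((le_max_right a a⁻¹).trans (le_max_left _ _))

theorem mem_infSub {f : G} (hf : 1 < f) {g : G} : g ∈ infSub f hf ↔ ∀ n : ℤ, g ^ n < f := Iff.rfl

theorem infSub_pos_exists {f : G} (hf : 1 < f) {g : G} (hg : g ∉ infSub f hf) (hg1 : 1 < g) :
    ∃ k : ℕ, 1 ≤ k ∧ f ≤ g ^ (k:ℤ) := by
  have hex : ∃ n : ℤ, f ≤ g ^ n := by
    by_contra hcon
    push_neg at hcon
    exact hg fun n => hcon n
  obtain ⟨n, hn⟩ := hex
  have hn0 : 0 < n := by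
    by_contra hcon
    push_neg at hcon
    exact absurd (hn.trans (gzpow_nonpos hg1.le hcon)) (not_le.mpr hf)
  refine ⟨n.toNat, by omega, ?_⟩
  rwa [Int.toNat_of_nonneg hn0.le]

theorem infSub_normal (f : G) (hf : 1 < f) (bound : ∀ g : G, ∃ k : ℕ, g ≤ f ^ k) :
    (infSub f hf).Normal := by
  constructor
  intro g hg h n
  show (h * g * h⁻¹) ^ n < f
  rw [conj_zpow]
  by_contra hcon
  rw [not_lt] at hcon
  obtain ⟨k1, hk1⟩ := bound h
  obtain ⟨k2, hk2⟩ := bound h⁻¹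
  set K := max k1 k2 with hK
  have hh1 : h ≤ f ^ K := hk1.trans (pow_le_pow_right' hf.le (le_max_left _ _))
  have hh2 : h⁻¹ ≤ f ^ K := hk2.trans (pow_le_pow_right' hf.le (le_max_right _ _))
  set M := K + 1 + K with hM
  have e1 : h * f * h⁻¹ ≤ f ^ M := by
    have hstep := mul_le_mul' (mul_le_mul' hh1 (le_refl f)) hh2
    calc h * f * h⁻¹ ≤ f ^ K * f * f ^ K := hstep
    _ = f ^ M := by rw [hM, pow_add, pow_succ]
  have e2 : f ≤ h⁻¹ * f ^ M * h := by
    have hstep := mul_le_mul' (mul_le_mul_right e1 h⁻¹) (le_refl h)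
    calc f = h⁻¹ * (h * f * h⁻¹) * h := by group
    _ ≤ h⁻¹ * f ^ M * h := hstep
  have e3 : h⁻¹ * f * h ≤ g ^ n := by
    have hstep := mul_le_mul' (mul_le_mul_right hcon h⁻¹) (le_refl h)
    calc h⁻¹ * f * h ≤ h⁻¹ * (h * g ^ n * h⁻¹) * h := hstep
    _ = g ^ n := by group
  have e4 : (h⁻¹ * f * h) ^ M ≤ (g ^ n) ^ M := pow_le_pow_left' e3 M
  have e5 : (h⁻¹ * f * h) ^ M = h⁻¹ * f ^ M * h := by
    have := conj_pow (a := h⁻¹) (b := f) (i := M)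
    simpa using this
  have e6 : (g ^ n) ^ M = g ^ (n * (M:ℤ)) := by
    rw [← zpow_natCast (g ^ n) M, ← zpow_mul]
  have : f < f := by
    calc f ≤ h⁻¹ * f ^ M * h := e2
    _ = (h⁻¹ * f * h) ^ M := e5.symm
    _ ≤ (g ^ n) ^ M := e4
    _ = g ^ (n * (M:ℤ)) := e6
    _ < f := hg _
  exact lt_irrefl f this

end AbstractOrder

section Holder

variable {Q : Type*} [Group Q] [LinearOrder Q]
  [CovariantClass Q Q (· * ·) (· ≤ ·)] [CovariantClass Q Q (Function.swap (· * ·)) (· ≤ ·)]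

theorem holder_between (arch : ∀ ξ : Q, 1 < ξ → ∀ η : Q, ∃ n : ℕ, η ≤ ξ ^ n)
    {ε : Q} (hε : 1 < ε) (a : Q) : ∃ m : ℤ, ε ^ m ≤ a ∧ a < ε ^ (m + 1) := by
  obtain ⟨N, hN⟩ := arch ε hε a
  obtain ⟨M, hM⟩ := arch ε hε a⁻¹
  have hInh : ∃ m : ℤ, ε ^ m ≤ a := by
    refine ⟨-(M:ℤ), ?_⟩
    have h1 : a⁻¹ * a ≤ ε ^ M * a := mul_le_mul_left hM a
    rw [inv_mul_cancel] at h1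
    have h2 := mul_le_mul_right h1 (ε ^ M)⁻¹
    rw [mul_one, inv_mul_cancel_left] at h2
    rwa [zpow_neg, zpow_natCast]
  have Hbdd : ∀ z : ℤ, ε ^ z ≤ a → z ≤ (N:ℤ) := by
    intro z hz
    by_contra hcon
    push_neg at hcon
    have hlt : ε ^ (N:ℤ) < ε ^ z := gzpow_lt_zpow hε hcon
    have h2 : a ≤ ε ^ (N:ℤ) := by rwa [zpow_natCast]
    exact absurd (hz.trans h2) (not_le.mpr hlt)
  obtain ⟨m, hm, hmax⟩ := Int.exists_greatest_of_bdd ⟨(N:ℤ), Hbdd⟩ hInh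
  refine ⟨m, hm, ?_⟩
  by_contra hcon
  push_neg at hcon
  have := hmax (m+1) hcon
  omega

theorem holder_comm_small (arch : ∀ ξ : Q, 1 < ξ → ∀ η : Q, ∃ n : ℕ, η ≤ ξ ^ n)
    {ε : Q} (hε : 1 < ε) (a b : Q) : (b * a)⁻¹ * (a * b) < ε ^ (2:ℤ) := by
  obtain ⟨m, hm1, hm2⟩ := holder_between arch hε a
  obtain ⟨p, hp1, hp2⟩ := holder_between arch hε b
  have h1 : a * b < ε ^ (m + 1 + (p + 1)) := by
    calc a * b < ε ^ (m+1) * b := glt_mul_right b hm2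
    _ < ε ^ (m+1) * ε ^ (p+1) := glt_mul_left _ hp2
    _ = ε ^ (m+1+(p+1)) := (zpow_add ε _ _).symm
  have h2 : ε ^ (p + m) ≤ b * a := by
    calc ε ^ (p+m) = ε ^ p * ε ^ m := zpow_add ε p m
    _ ≤ b * a := mul_le_mul' hp1 hm1
  have h3 : (b*a)⁻¹ ≤ (ε ^ (p+m))⁻¹ := inv_le_inv_iff.mpr h2
  calc (b*a)⁻¹ * (a*b) < (b*a)⁻¹ * ε ^ (m+1+(p+1)) := glt_mul_left _ h1
  _ ≤ (ε ^ (p+m))⁻¹ * ε ^ (m+1+(p+1)) := mul_le_mul_left h3 _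
  _ = ε ^ (2:ℤ) := by
      rw [← zpow_neg, ← zpow_add]
      congr 1
      ring

theorem holder_comm (arch : ∀ ξ : Q, 1 < ξ → ∀ η : Q, ∃ n : ℕ, η ≤ ξ ^ n)
    (a b : Q) : a * b = b * a := by
  by_contra hne
  set t := (b * a)⁻¹ * (a * b) with ht
  have ht1 : t ≠ 1 := by
    intro hh
    rw [ht, inv_mul_eq_one] at hh
    exact hne hh.symm
  have htinv : t⁻¹ = (a * b)⁻¹ * (b * a) := by
    rw [ht, mul_inv_rev, inv_inv]
  have hs1 : 1 < max t t⁻¹ := by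
    rcases lt_trichotomy t 1 with hh | hh | hh
    · have h2 : 1 < t⁻¹ := by
        have := glt_mul_left t⁻¹ hh
        rwa [inv_mul_cancel, mul_one] at this
      exact lt_max_iff.mpr (Or.inr h2)
    · exact absurd hh ht1
    · exact lt_max_iff.mpr (Or.inl hh)
  set s := max t t⁻¹ with hs
  have hsmall : ∀ ε : Q, 1 < ε → s < ε ^ (2:ℤ) := by
    intro ε hε
    refine max_lt (holder_comm_small arch hε a b) ?_
    rw [htinv]
    exact holder_comm_small arch hε b a
  have hsq : ∃ ε : Q, 1 < ε ∧ ε * ε ≤ s := by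
    by_cases hu : ∃ u : Q, 1 < u ∧ u < s
    · obtain ⟨u, hu1, hus⟩ := hu
      by_cases h2 : u * u ≤ s
      · exact ⟨u, hu1, h2⟩
      · push_neg at h2
        refine ⟨u⁻¹ * s, ?_, ?_⟩
        · have := glt_mul_left u⁻¹ hus
          rwa [inv_mul_cancel] at this
        · have hA : u⁻¹ * s ≤ u := by
            have := mul_le_mul_right h2.le u⁻¹
            rwa [← mul_assoc, inv_mul_cancel, one_mul] at this
          calc u⁻¹ * s * (u⁻¹ * s) ≤ u * (u⁻¹ * s) := mul_le_mul_left hA _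
          _ = s := by rw [← mul_assoc, mul_inv_cancel, one_mul]
    · push_neg at hu
      have hcyc : ∀ g : Q, ∃ m : ℤ, g = s ^ m := by
        intro g
        obtain ⟨m, h1, h2⟩ := holder_between arch hs1 g
        refine ⟨m, ?_⟩
        have hr1 : 1 ≤ (s ^ m)⁻¹ * g := by
          have := mul_le_mul_right h1 (s ^ m)⁻¹
          rwa [inv_mul_cancel] at this
        have hr2 : (s ^ m)⁻¹ * g < s := by
          have hlt := glt_mul_left (s ^ m)⁻¹ h2
          have e : (s^m)⁻¹ * s^(m+1) = s := by
            rw [← zpow_neg, ← zpow_add]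
            norm_num
          rwa [e] at hlt
        rcases lt_or_ge 1 ((s ^ m)⁻¹ * g) with hcase | hcase
        · exact absurd hr2 (not_lt.mpr (hu _ hcase))
        · have he : (s ^ m)⁻¹ * g = 1 := le_antisymm hcase hr1
          rw [inv_mul_eq_one] at he
          exact he.symm
      obtain ⟨i, hi⟩ := hcyc a
      obtain ⟨j, hj⟩ := hcyc b
      exact (hne (by rw [hi, hj, ← zpow_add, ← zpow_add, add_comm])).elim
  obtain ⟨ε, hε1, hε2⟩ := hsq
  have hlt := hsmall ε hε1
  have he2 : ε ^ (2:ℤ) = ε * ε := by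
    rw [show (2:ℤ) = ((2:ℕ):ℤ) by norm_num, zpow_natCast, pow_two]
  rw [he2] at hlt
  exact absurd hε2 (not_le.mpr hlt)

theorem infSub_commutator (f : Q) (hf : 1 < f) (bound : ∀ g : Q, ∃ k : ℕ, g ≤ f ^ k)
    (a b : Q) : ⁅a, b⁆ ∈ infSub f hf := by
  classical
  letI hNorm : (infSub f hf).Normal := infSub_normal f hf bound
  set H := infSub f hf with hHdef
  have posN : ∀ {g : Q}, (1 < g ∧ g ∉ H) → ∃ k : ℕ, 1 ≤ k ∧ f ≤ g ^ (k:ℤ) :=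
    fun hg => infSub_pos_exists hf hg.2 hg.1
  have L3 : ∀ {p r : Q}, (1 < p ∧ p ∉ H) → p ≤ r → (1 < r ∧ r ∉ H) := by
    intro p r hp hpr
    obtain ⟨k, hk1, hkf⟩ := posN hp
    refine ⟨lt_of_lt_of_le hp.1 hpr, fun hr => ?_⟩
    have h1 : f ≤ r ^ (k:ℤ) := by
      refine hkf.trans ?_
      rw [zpow_natCast, zpow_natCast]
      exact pow_le_pow_left' hpr k
    exact absurd (h1.trans_lt (hr (k:ℤ))) (lt_irrefl f)
  have posMul : ∀ {p q : Q}, (1 < p ∧ p ∉ H) → (1 < q ∧ q ∉ H) → (1 < q * p ∧ q * p ∉ H) := by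
    intro p q hp hq
    refine L3 hp ?_
    calc p = 1 * p := (one_mul p).symm
    _ ≤ q * p := mul_le_mul_left hq.1.le p
  have posConj : ∀ {p : Q} (w : Q), (1 < p ∧ p ∉ H) → (1 < w * p * w⁻¹ ∧ w * p * w⁻¹ ∉ H) := by
    intro p w hp
    constructor
    · have h1 : w * 1 * w⁻¹ < w * p * w⁻¹ := glt_mul_right w⁻¹ (glt_mul_left w hp.1)
      rwa [mul_one, mul_inv_cancel] at h1
    · intro hmem
      apply hp.2
      have hc := hNorm.conj_mem _ hmem w⁻¹
      have e : w⁻¹ * (w * p * w⁻¹) * w⁻¹⁻¹ = p := by group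
      rwa [e] at hc
  have posWell : ∀ {g u : Q}, (1 < g ∧ g ∉ H) → u ∈ H → (1 < g * u ∧ g * u ∉ H) := by
    intro g u hg hu
    refine ⟨?_, fun hgu => hg.2 ?_⟩
    · by_contra hle
      push_neg at hle
      obtain ⟨k, hk1, hkf⟩ := posN hg
      have h1 : g ≤ u⁻¹ := by
        have := mul_le_mul_left hle u⁻¹
        rwa [mul_assoc, mul_inv_cancel, mul_one, one_mul] at this
      have h2 : g ^ (k:ℤ) ≤ (u⁻¹) ^ (k:ℤ) := by
        rw [zpow_natCast, zpow_natCast]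
        exact pow_le_pow_left' h1 k
      have h3 : (u⁻¹) ^ (k:ℤ) < f := (mem_infSub hf).mp (H.inv_mem hu) (k:ℤ)
      exact absurd ((hkf.trans h2).trans_lt h3) (lt_irrefl f)
    · have h1 : (g * u) * u⁻¹ ∈ H := H.mul_mem hgu (H.inv_mem hu)
      rwa [mul_assoc, mul_inv_cancel, mul_one] at h1
  have surj : ∀ x : Q ⧸ H, ∃ g : Q, QuotientGroup.mk g = x := fun x => QuotientGroup.mk_surjective x
  have posRep : ∀ {g g' : Q}, (QuotientGroup.mk g : Q ⧸ H) = QuotientGroup.mk g' →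
      (1 < g ∧ g ∉ H) → (1 < g' ∧ g' ∉ H) := by
    intro g g' he hg
    have hu : g⁻¹ * g' ∈ H := QuotientGroup.eq.mp he
    have e : g' = g * (g⁻¹ * g') := by group
    rw [e]
    exact posWell hg hu
  let ltQ : Q ⧸ H → Q ⧸ H → Prop := fun x y => ∃ g h : Q,
    QuotientGroup.mk g = x ∧ QuotientGroup.mk h = y ∧ (1 < h * g⁻¹ ∧ h * g⁻¹ ∉ H)
  have ltQ_mk : ∀ {g h : Q}, ltQ (QuotientGroup.mk g) (QuotientGroup.mk h) ↔
      (1 < h * g⁻¹ ∧ h * g⁻¹ ∉ H) := by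
    intro g h
    constructor
    · rintro ⟨g', h', hg', hh', hp⟩
      refine posRep (g := h' * g'⁻¹) ?_ hp
      rw [QuotientGroup.mk_mul, QuotientGroup.mk_mul, QuotientGroup.mk_inv,
        QuotientGroup.mk_inv, hg', hh']
    · intro hp
      exact ⟨g, h, rfl, rfl, hp⟩
  have ltQ_trans : ∀ {x y z : Q ⧸ H}, ltQ x y → ltQ y z → ltQ x z := by
    intro x y z hxy hyz
    obtain ⟨g1, rfl⟩ := surj x
    obtain ⟨g2, rfl⟩ := surj y
    obtain ⟨g3, rfl⟩ := surj z
    rw [ltQ_mk] at hxy hyz ⊢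
    have hp := posMul hxy hyz
    have e : (g3 * g2⁻¹) * (g2 * g1⁻¹) = g3 * g1⁻¹ := by group
    rwa [e] at hp
  have ltQ_irrefl : ∀ x : Q ⧸ H, ¬ ltQ x x := by
    intro x hx
    obtain ⟨g, rfl⟩ := surj x
    rw [ltQ_mk] at hx
    rw [mul_inv_cancel] at hx
    exact lt_irrefl 1 hx.1
  have ltQ_asymm : ∀ {x y : Q ⧸ H}, ltQ x y → ltQ y x → False :=
    fun hxy hyx => ltQ_irrefl _ (ltQ_trans hxy hyx)
  have ltQ_total : ∀ x y : Q ⧸ H, x = y ∨ ltQ x y ∨ ltQ y x := by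
    intro x y
    obtain ⟨g, rfl⟩ := surj x
    obtain ⟨h, rfl⟩ := surj y
    by_cases he : (QuotientGroup.mk g : Q ⧸ H) = QuotientGroup.mk h
    · exact Or.inl he
    · have hne : h * g⁻¹ ∉ H := by
        intro hmem
        apply he
        refine QuotientGroup.eq.mpr ?_
        have hc := hNorm.conj_mem _ hmem g⁻¹
        have e : g⁻¹ * (h * g⁻¹) * g⁻¹⁻¹ = g⁻¹ * h := by group
        rwa [e] at hc
      rcases lt_trichotomy 1 (h * g⁻¹) with hlt | heq | hgt
      · exact Or.inr (Or.inl (ltQ_mk.mpr ⟨hlt, hne⟩))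
      · exact (hne (heq ▸ H.one_mem)).elim
      · refine Or.inr (Or.inr (ltQ_mk.mpr ⟨?_, ?_⟩))
        · have h1 := glt_mul_left (h * g⁻¹)⁻¹ hgt
          rw [inv_mul_cancel, mul_one] at h1
          rwa [mul_inv_rev, inv_inv] at h1
        · intro hmem
          apply hne
          have := H.inv_mem hmem
          rwa [mul_inv_rev, inv_inv] at this
  letI linQ : LinearOrder (Q ⧸ H) := {
    lt := ltQ
    le := fun x y => ltQ x y ∨ x = y
    le_refl := fun x => Or.inr rfl
    le_trans := by
      intro x y z hxy hyz
      rcases hxy with h1 | h1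
      · rcases hyz with h2 | h2
        · exact Or.inl (ltQ_trans h1 h2)
        · exact Or.inl (h2 ▸ h1)
      · rw [h1]; exact hyz
    le_antisymm := by
      intro x y hxy hyx
      rcases hxy with h1 | h1
      · rcases hyx with h2 | h2
        · exact (ltQ_asymm h1 h2).elim
        · exact h2.symm
      · exact h1
    le_total := by
      intro x y
      rcases ltQ_total x y with h | h | h
      · exact Or.inl (Or.inr h)
      · exact Or.inl (Or.inl h)
      · exact Or.inr (Or.inl h)
    lt_iff_le_not_ge := by
      intro x y
      constructor
      · intro h
        refine ⟨Or.inl h, ?_⟩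
        rintro (h' | h')
        · exact ltQ_asymm h h'
        · rw [h'] at h
          exact ltQ_irrefl _ h
      · rintro ⟨h1 | h1, h2⟩
        · exact h1
        · exact absurd (Or.inr h1.symm) h2
    toDecidableLE := Classical.decRel _ }
  letI covQ : CovariantClass (Q ⧸ H) (Q ⧸ H) (· * ·) (· ≤ ·) := by
    refine ⟨?_⟩
    intro c x y hxy
    have h' : ltQ x y ∨ x = y := hxy
    rcases h' with hlt | heq
    · obtain ⟨w, rfl⟩ := surj c
      obtain ⟨g, rfl⟩ := surj x
      obtain ⟨h, rfl⟩ := surj y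
      refine Or.inl ?_
      show ltQ (QuotientGroup.mk w * QuotientGroup.mk g) (QuotientGroup.mk w * QuotientGroup.mk h)
      rw [← QuotientGroup.mk_mul, ← QuotientGroup.mk_mul, ltQ_mk]
      have e : (w * h) * (w * g)⁻¹ = w * (h * g⁻¹) * w⁻¹ := by group
      rw [e]
      exact posConj w (ltQ_mk.mp hlt)
    · exact Or.inr (by rw [heq])
  letI covQ' : CovariantClass (Q ⧸ H) (Q ⧸ H) (Function.swap (· * ·)) (· ≤ ·) := by
    refine ⟨?_⟩
    intro c x y hxy
    have h' : ltQ x y ∨ x = y := hxy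
    rcases h' with hlt | heq
    · obtain ⟨w, rfl⟩ := surj c
      obtain ⟨g, rfl⟩ := surj x
      obtain ⟨h, rfl⟩ := surj y
      refine Or.inl ?_
      show ltQ (QuotientGroup.mk g * QuotientGroup.mk w) (QuotientGroup.mk h * QuotientGroup.mk w)
      rw [← QuotientGroup.mk_mul, ← QuotientGroup.mk_mul, ltQ_mk]
      have e : (h * w) * (g * w)⁻¹ = h * g⁻¹ := by group
      rw [e]
      exact ltQ_mk.mp hlt
    · exact Or.inr (by rw [heq])
  have leQ_of_le : ∀ {r t : Q}, t ≤ r → (QuotientGroup.mk t : Q ⧸ H) ≤ QuotientGroup.mk r := by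
    intro r t htr
    by_cases hmem : r * t⁻¹ ∈ H
    · refine Or.inr (QuotientGroup.eq.mpr ?_)
      have hc := hNorm.conj_mem _ hmem t⁻¹
      have e : t⁻¹ * (r * t⁻¹) * t⁻¹⁻¹ = t⁻¹ * r := by group
      rwa [e] at hc
    · refine Or.inl (ltQ_mk.mpr ⟨?_, hmem⟩)
      have h1 : 1 ≤ r * t⁻¹ := by
        have := mul_le_mul_left htr t⁻¹
        rwa [mul_inv_cancel] at this
      rcases h1.lt_or_eq with hh | hh
      · exact hh
      · exact (hmem (hh ▸ H.one_mem)).elim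
  have archQ : ∀ ξ : Q ⧸ H, 1 < ξ → ∀ η : Q ⧸ H, ∃ n : ℕ, η ≤ ξ ^ n := by
    intro ξ hξ η
    obtain ⟨s, rfl⟩ := surj ξ
    obtain ⟨t, rfl⟩ := surj η
    have hspos : 1 < s ∧ s ∉ H := by
      have h1 : ltQ 1 (QuotientGroup.mk s) := hξ
      rw [show (1 : Q ⧸ H) = QuotientGroup.mk 1 from (QuotientGroup.mk_one H).symm] at h1
      rw [ltQ_mk] at h1
      simpa using h1
    obtain ⟨k, hk1, hkf⟩ := posN hspos
    obtain ⟨K, hK⟩ := bound t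
    refine ⟨k * K, ?_⟩
    have h1 : t ≤ s ^ (k * K) := by
      refine hK.trans ?_
      have h2 : f ≤ s ^ k := by rwa [zpow_natCast] at hkf
      calc f ^ K ≤ (s ^ k) ^ K := pow_le_pow_left' h2 K
      _ = s ^ (k * K) := (pow_mul s k K).symm
    have h3 := leQ_of_le h1
    rwa [QuotientGroup.mk_pow] at h3
  have hQcomm := holder_comm archQ
  have hone : (QuotientGroup.mk ⁅a, b⁆ : Q ⧸ H) = 1 := by
    have e : (QuotientGroup.mk ⁅a, b⁆ : Q ⧸ H) =
        ⁅(QuotientGroup.mk a : Q ⧸ H), QuotientGroup.mk b⁆ := by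
      rw [commutatorElement_def, commutatorElement_def, QuotientGroup.mk_mul,
        QuotientGroup.mk_mul, QuotientGroup.mk_mul, QuotientGroup.mk_inv, QuotientGroup.mk_inv]
    rw [e]
    exact commutatorElement_eq_one_iff_mul_comm.mpr (hQcomm _ _)
  exact (QuotientGroup.eq_one_iff _).mp hone

end Holder

theorem stmt11 (Γ : Subgroup IntervalMap) (hΓhomeo : HomeoSubgroup Γ)
    (hΓfix : FinFix Γ) (hΓnt : Γ ≠ ⊥)
    (S : Finset IntervalMap) (hSsub : (S : Set IntervalMap) ⊆ Γ)
    (hSsym : ∀ s ∈ S, s⁻¹ ∈ S)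
    (hSgen : Subgroup.closure (S : Set IntervalMap) = Γ)
    (f : IntervalMap) (hfS : f ∈ S) (hfbig : ∀ ξ ∈ S, leNear ξ f) :
    ∃ H : Subgroup ↥Γ,
      (H : Set ↥Γ) = {γ : ↥Γ | Infinitesimal (γ : IntervalMap) f} ∧
      H.Normal ∧ (∀ a b : ↥Γ, ⁅a, b⁆ ∈ H) ∧ commutator ↥Γ ≤ H := by
  classical
  letI LO : LinearOrder ↥Γ := gammaLinearOrder Γ hΓhomeo hΓfix
  letI CL : CovariantClass ↥Γ ↥Γ (· * ·) (· ≤ ·) := gammaCovL Γ hΓhomeo hΓfix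
  letI CR : CovariantClass ↥Γ ↥Γ (Function.swap (· * ·)) (· ≤ ·) := gammaCovR Γ hΓhomeo hΓfix
  set f' : ↥Γ := ⟨f, hSsub hfS⟩ with hf'def
  have hle : ∀ a b : ↥Γ, leNear (a : IntervalMap) (b : IntervalMap) → a ≤ b := by
    rintro a b (h | h)
    · exact Or.inl h
    · exact Or.inr (Subtype.ext h)
  have hf1 : (1 : ↥Γ) < f' := by
    obtain ⟨s, hsS, hs1⟩ : ∃ s ∈ S, s ≠ 1 := by
      by_contra hcon
      push_neg at hcon
      apply hΓnt
      have h1 : Subgroup.closure (S : Set IntervalMap) ≤ ⊥ := by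
        rw [Subgroup.closure_le]
        intro x hx
        simp [hcon x hx]
      rw [← hSgen]
      exact le_bot_iff.mp h1
    set s' : ↥Γ := ⟨s, hSsub hsS⟩ with hs'def
    have h1 : s' ≤ f' := hle _ _ (hfbig s hsS)
    have h2 : s'⁻¹ ≤ f' := hle _ _ (hfbig s⁻¹ (hSsym s hsS))
    rcases lt_or_ge 1 f' with h | h
    · exact h
    · exfalso
      have h3 : s' ≤ 1 := h1.trans h
      have h4 : s'⁻¹ ≤ 1 := h2.trans h
      have h5 : (1:↥Γ) ≤ s' := by
        have := mul_le_mul_right h4 s'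
        rwa [mul_inv_cancel, mul_one] at this
      have h6 : s' = 1 := le_antisymm h3 h5
      apply hs1
      have := congrArg (Subtype.val) h6
      exact this
  have bound : ∀ g : ↥Γ, ∃ k : ℕ, g ≤ f' ^ k := by
    intro g
    have hg : (g : IntervalMap) ∈ Subgroup.closure (S : Set IntervalMap) := by
      rw [hSgen]; exact g.2
    have main : ∀ (x : IntervalMap), x ∈ Subgroup.closure (S : Set IntervalMap) →
        ∃ k : ℕ, ∀ (hm : x ∈ Γ), (⟨x, hm⟩ : ↥Γ) ≤ f' ^ k ∧ (⟨x, hm⟩ : ↥Γ)⁻¹ ≤ f' ^ k := by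
      intro x hx
      induction hx using Subgroup.closure_induction with
      | mem y hy =>
          refine ⟨1, fun hm => ?_⟩
          rw [pow_one]
          constructor
          · exact hle _ _ (hfbig y hy)
          · exact hle _ _ (hfbig y⁻¹ (hSsym y hy))
      | one =>
          refine ⟨0, fun hm => ?_⟩
          rw [pow_zero]
          have e : (⟨1, hm⟩ : ↥Γ) = 1 := by ext; rfl
          rw [e]
          exact ⟨le_refl 1, by rw [inv_one]⟩
      | mul y z hy hz ihy ihz =>
          obtain ⟨k1, h1⟩ := ihy
          obtain ⟨k2, h2⟩ := ihz
          refine ⟨k1 + k2, fun hm => ?_⟩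
          have hym : y ∈ Γ := by rw [← hSgen]; exact hy
          have hzm : z ∈ Γ := by rw [← hSgen]; exact hz
          have e : (⟨y * z, hm⟩ : ↥Γ) = ⟨y, hym⟩ * ⟨z, hzm⟩ := by ext; rfl
          rw [e]
          constructor
          · calc (⟨y, hym⟩ : ↥Γ) * ⟨z, hzm⟩ ≤ f' ^ k1 * f' ^ k2 :=
                mul_le_mul' (h1 hym).1 (h2 hzm).1
            _ = f' ^ (k1 + k2) := (pow_add f' k1 k2).symm
          · rw [mul_inv_rev]
            calc (⟨z, hzm⟩ : ↥Γ)⁻¹ * (⟨y, hym⟩ : ↥Γ)⁻¹ ≤ f' ^ k2 * f' ^ k1 :=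
                mul_le_mul' (h2 hzm).2 (h1 hym).2
            _ = f' ^ (k1 + k2) := by rw [← pow_add, Nat.add_comm]
      | inv y hy ihy =>
          obtain ⟨k, h1⟩ := ihy
          refine ⟨k, fun hm => ?_⟩
          have hym : y ∈ Γ := by rw [← hSgen]; exact hy
          have e : (⟨y⁻¹, hm⟩ : ↥Γ) = (⟨y, hym⟩ : ↥Γ)⁻¹ := by ext; rfl
          rw [e]
          exact ⟨(h1 hym).2, by rw [inv_inv]; exact (h1 hym).1⟩
    obtain ⟨k, hk⟩ := main (g : IntervalMap) hg
    refine ⟨k, ?_⟩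
    have := (hk g.2).1
    have e : (⟨(g : IntervalMap), g.2⟩ : ↥Γ) = g := by ext; rfl
    rwa [e] at this
  have hnormal := infSub_normal f' hf1 bound
  have hcomm := infSub_commutator f' hf1 bound
  refine ⟨infSub f' hf1, ?_, hnormal, hcomm, ?_⟩
  · ext γ
    show (∀ n : ℤ, γ ^ n < f') ↔ Infinitesimal (γ : IntervalMap) f
    constructor
    · intro h n
      have h1 : ltNear ((γ ^ n : ↥Γ) : IntervalMap) ((f' : ↥Γ) : IntervalMap) := h n
      rwa [SubgroupClass.coe_zpow] at h1
    · intro h n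
      have h1 := h n
      show ltNear ((γ ^ n : ↥Γ) : IntervalMap) ((f' : ↥Γ) : IntervalMap)
      rwa [SubgroupClass.coe_zpow]
  · rw [commutator_def]
    exact Subgroup.commutator_le.mpr fun g1 _ g2 _ => hcomm g1 g2

end
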